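/- Let ρ0 and ρ1 be positive definite Hermitian D×D complex matrices. Define M = ρ1^{-1/2} √(ρ1^{1/2} ρ0 ρ1^{1/2}) ρ1^{-1/2} and N = ρ0^{-1/2} √(ρ0^{1/2} ρ1 ρ0^{1/2}) ρ0^{-1/2}. Then M N = I; that is, N = M^{-1}. -/

import Mathlib

open Matrix
open scoped ComplexOrder

/-- The square root of a positive semidefinite matrix, as `Matrix.PosSemidef.sqrt` was defined
in Mathlib of December 2024 (since removed in favour of `CFC.sqrt`). -/
noncomputable def Matrix.PosSemidef.sqrt {n : Type*} [Fintype n] [DecidableEq n] {𝕜 : Type*}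
    [RCLike 𝕜] {A : Matrix n n 𝕜} (hA : A.PosSemidef) : Matrix n n 𝕜 :=
  hA.1.eigenvectorUnitary.1 * diagonal ((↑) ∘ (√·) ∘ hA.1.eigenvalues) *
  (star hA.1.eigenvectorUnitary : Matrix n n 𝕜)

/-- The sandwiched matrix `ρ1^{1/2} ρ0 ρ1^{1/2}` is positive semidefinite. -/
noncomputable def sandwichPosSemidef {D : ℕ} {ρ0 ρ1 : Matrix (Fin D) (Fin D) ℂ}
    (hρ0 : ρ0.PosSemidef) (hρ1 : ρ1.PosSemidef) :
    (hρ1.sqrt * ρ0 * hρ1.sqrt).PosSemidef := by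
  have h := hρ0.mul_mul_conjTranspose_same hρ1.sqrt
  have hs : hρ1.sqrtᴴ = hρ1.sqrt := by
    simp [Matrix.PosSemidef.sqrt, conjTranspose_mul, diagonal_conjTranspose, Matrix.mul_assoc]
    rw [star_eq_conjTranspose, conjTranspose_conjTranspose]
    have hc : star (Complex.ofReal ∘ (fun x : ℝ => √x) ∘ hρ1.1.eigenvalues) =
        Complex.ofReal ∘ (fun x : ℝ => √x) ∘ hρ1.1.eigenvalues := by
      funext i; simp
    rw [hc]
  rwa [hs] at h

/-- The operator `M = ρ1^{-1/2} √(ρ1^{1/2} ρ0 ρ1^{1/2}) ρ1^{-1/2}`. -/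
noncomputable def Mop {D : ℕ} {ρ0 ρ1 : Matrix (Fin D) (Fin D) ℂ}
    (hρ0 : ρ0.PosSemidef) (hρ1 : ρ1.PosSemidef) : Matrix (Fin D) (Fin D) ℂ :=
  hρ1.sqrt⁻¹ * (sandwichPosSemidef hρ0 hρ1).sqrt * hρ1.sqrt⁻¹

section SqrtHelpers
open scoped MatrixOrder

theorem Matrix.PosSemidef.sqrt_eq_CFCsqrt {D : ℕ} {A : Matrix (Fin D) (Fin D) ℂ}
    (hA : A.PosSemidef) : hA.sqrt = CFC.sqrt A := by
  rw [CFC.sqrt_eq_cfc, cfc_nnreal_eq_real _ A, hA.1.cfc_eq]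
  simp only [IsHermitian.cfc, Matrix.PosSemidef.sqrt]
  congr 3
  funext i
  simp [Real.coe_sqrt, Real.coe_toNNReal', max_eq_left (hA.eigenvalues_nonneg i)]

theorem Matrix.PosSemidef.posSemidef_sqrt {D : ℕ} {A : Matrix (Fin D) (Fin D) ℂ}
    (hA : A.PosSemidef) : hA.sqrt.PosSemidef := by
  rw [hA.sqrt_eq_CFCsqrt]
  exact (CFC.sqrt_nonneg A).posSemidef

theorem Matrix.PosSemidef.sqrt_mul_self {D : ℕ} {A : Matrix (Fin D) (Fin D) ℂ}
    (hA : A.PosSemidef) : hA.sqrt * hA.sqrt = A := by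
  rw [hA.sqrt_eq_CFCsqrt]
  exact CFC.sqrt_mul_sqrt_self A hA.nonneg

theorem Matrix.PosSemidef.eq_sqrt_of_sq_eq {D : ℕ} {A B : Matrix (Fin D) (Fin D) ℂ}
    (hA : A.PosSemidef) (hB : B.PosSemidef) (h : A ^ 2 = B) : A = hB.sqrt := by
  rw [hB.sqrt_eq_CFCsqrt, ← h, CFC.sqrt_sq A hA.nonneg]

end SqrtHelpers

/-- If `M` is positive definite, its positive semidefinite square root has unit determinant. -/
lemma sqrt_det_isUnit {D : ℕ} {M : Matrix (Fin D) (Fin D) ℂ} (hM : M.PosDef)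
    (hMs : M.PosSemidef) : IsUnit hMs.sqrt.det := by
  have h : hMs.sqrt.det * hMs.sqrt.det = M.det := by
    rw [← det_mul, hMs.sqrt_mul_self]
  have hMd : IsUnit M.det := (isUnit_iff_isUnit_det M).mp hM.isUnit
  rw [← h] at hMd
  exact isUnit_of_mul_isUnit_left hMd

/-- For positive definite `ρ0, ρ1`, the operators
`M = ρ1^{-1/2} √(ρ1^{1/2} ρ0 ρ1^{1/2}) ρ1^{-1/2}` and
`N = ρ0^{-1/2} √(ρ0^{1/2} ρ1 ρ0^{1/2}) ρ0^{-1/2}` are mutually inverse: `M N = I`. -/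
theorem Mop_mul_Nop_eq_one {D : ℕ} (ρ0 ρ1 : Matrix (Fin D) (Fin D) ℂ)
    (hρ0 : ρ0.PosDef) (hρ1 : ρ1.PosDef) :
    Mop hρ0.posSemidef hρ1.posSemidef * Mop hρ1.posSemidef hρ0.posSemidef = 1 := by
  set A := hρ0.posSemidef.sqrt with hAdef
  set B := hρ1.posSemidef.sqrt with hBdef
  have hA : A.PosSemidef := hρ0.posSemidef.posSemidef_sqrt
  have hB : B.PosSemidef := hρ1.posSemidef.posSemidef_sqrt
  have hAA : A * A = ρ0 := hρ0.posSemidef.sqrt_mul_self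
  have hBB : B * B = ρ1 := hρ1.posSemidef.sqrt_mul_self
  have hAu : IsUnit A.det := sqrt_det_isUnit hρ0 _
  have hBu : IsUnit B.det := sqrt_det_isUnit hρ1 _
  set Tpsd := sandwichPosSemidef hρ1.posSemidef hρ0.posSemidef with hTpsd
  set T := Tpsd.sqrt with hTdef
  have hT : T.PosSemidef := Tpsd.posSemidef_sqrt
  have hTT : T * T = A * ρ1 * A := Tpsd.sqrt_mul_self
  have hTu : IsUnit T.det := by
    have h : T.det * T.det = (A * ρ1 * A).det := by rw [← det_mul, hTT]
    have hd : IsUnit (A * ρ1 * A).det := by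
      simp only [det_mul]
      exact (hAu.mul ((isUnit_iff_isUnit_det ρ1).mp hρ1.isUnit)).mul hAu
    rw [← h] at hd
    exact isUnit_of_mul_isUnit_left hd
  have hTinvH : T⁻¹ᴴ = T⁻¹ := by rw [conjTranspose_nonsing_inv, hT.isHermitian.eq]
  -- key: √(B ρ0 B) = B * A * T⁻¹ * A * B
  have hkey : (sandwichPosSemidef hρ0.posSemidef hρ1.posSemidef).sqrt
      = B * A * T⁻¹ * A * B := by
    have hc : (B * A * T⁻¹ * A * B).PosSemidef := by
      have h := hT.mul_mul_conjTranspose_same (B * A * T⁻¹)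
      have heq : B * A * T⁻¹ * T * (B * A * T⁻¹)ᴴ = B * A * T⁻¹ * A * B := by
        rw [conjTranspose_mul, conjTranspose_mul, hTinvH, hA.isHermitian.eq,
          hB.isHermitian.eq, Matrix.mul_assoc (B * A * T⁻¹) T,
          Matrix.mul_nonsing_inv_cancel_left T _ hTu, ← Matrix.mul_assoc]
      rwa [heq] at h
    have hsq : (B * A * T⁻¹ * A * B) ^ 2 = B * ρ0 * B := by
      rw [pow_two]
      calc B * A * T⁻¹ * A * B * (B * A * T⁻¹ * A * B)
          = B * A * T⁻¹ * (A * (B * B) * A) * (T⁻¹ * A * B) := by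
            simp only [Matrix.mul_assoc]
        _ = B * A * T⁻¹ * (T * T) * (T⁻¹ * A * B) := by rw [hBB, ← hTT]
        _ = B * A * (T⁻¹ * T) * (T * T⁻¹) * (A * B) := by
            simp only [Matrix.mul_assoc]
        _ = B * (A * A) * B := by
            rw [Matrix.nonsing_inv_mul T hTu, Matrix.mul_nonsing_inv T hTu]
            simp only [Matrix.mul_one, Matrix.mul_assoc]
        _ = B * ρ0 * B := by rw [hAA]
    exact (hc.eq_sqrt_of_sq_eq _ hsq).symm
  show B⁻¹ * (sandwichPosSemidef hρ0.posSemidef hρ1.posSemidef).sqrt * B⁻¹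
      * (A⁻¹ * T * A⁻¹) = 1
  rw [hkey]
  simp only [Matrix.mul_assoc]
  rw [Matrix.nonsing_inv_mul_cancel_left B _ hBu,
    Matrix.mul_nonsing_inv_cancel_left B _ hBu,
    Matrix.mul_nonsing_inv_cancel_left A _ hAu,
    Matrix.nonsing_inv_mul_cancel_left T _ hTu]
  exact Matrix.mul_nonsing_inv A hAu
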